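/- arXiv:math/0211390 — 3 statements merged into one kernel-verified Lean document; each statement's English description precedes it below -/
import Mathlib

section
/- For every n ≥ 1, the cd-index of the Boolean lattice is invariant under reversal of monomials: β(v) = β(v*) for every cd-monomial v, where v* is v written in reverse order. -/
open scoped TensorProduct

/-- cd-monomials: `false` is the letter `c`, `true` is the letter `d`. -/
abbrev Mon := List Bool

/-- The polynomial algebra `F = ℚ⟨c,d⟩`. -/
abbrev F := MonoidAlgebra ℚ (FreeMonoid Bool)

noncomputable def mono (w : Mon) : F := MonoidAlgebra.single (FreeMonoid.ofList w) 1

noncomputable def cF : F := mono [false]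
noncomputable def dF : F := mono [true]

noncomputable def gLetter : Bool → F
  | false => dF
  | true  => cF * dF

noncomputable def gMon : Mon → F
  | [] => 0
  | a :: t => gLetter a * mono t + mono [a] * gMon t

/-- The derivation `G` with `G c = d`, `G d = cd`. -/
noncomputable def G : F →ₗ[ℚ] F :=
  (Finsupp.lsum ℚ fun w => LinearMap.toSpanSingleton ℚ F (gMon (FreeMonoid.toList w))) ∘ₗ
    (MonoidAlgebra.coeffLinearEquiv ℚ).toLinearMap

/-- `Psi n` is the cd-index of the Boolean lattice of rank `n+1`. -/
noncomputable def Psi : ℕ → F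
  | 0 => 1
  | n+1 => Psi n * cF + G (Psi n)

/-- degree of a cd-monomial (`c` has degree 1, `d` degree 2). -/
def deg (w : Mon) : ℕ := w.length + w.count true

/-- `beta v` : coefficient of `v` in the cd-index of the Boolean lattice of rank `deg v + 1`. -/
noncomputable def beta (w : Mon) : ℚ := (Psi (deg w)).coeff (FreeMonoid.ofList w)

/-! ### Auxiliary development -/

lemma mono_mul (w u : Mon) : mono w * mono u = mono (w ++ u) := by
  simp [mono, MonoidAlgebra.single_mul_single, FreeMonoid.ofList_append]

lemma mono_nil : mono ([] : Mon) = 1 := rfl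

lemma mono_cons (a : Bool) (t : Mon) : mono (a :: t) = mono [a] * mono t := by
  rw [mono_mul, List.singleton_append]

lemma gMon_append (w u : Mon) :
    gMon (w ++ u) = gMon w * mono u + mono w * gMon u := by
  induction w with
  | nil => simp [gMon, mono_nil]
  | cons a t ih =>
      show gMon (a :: (t ++ u)) = _
      rw [gMon, gMon, ih, ← mono_mul t u, mono_cons a t]
      noncomm_ring

lemma gMon_singleton (a : Bool) : gMon [a] = gLetter a := by
  rw [gMon, gMon, mono_nil]; simp

def revm (w : FreeMonoid Bool) : FreeMonoid Bool :=
  FreeMonoid.ofList (FreeMonoid.toList w).reverse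

lemma revm_inj : Function.Injective revm := by
  intro a b h
  simpa [revm] using h

/-- The reversal map, as a linear map. -/
noncomputable def RF : F →ₗ[ℚ] F := MonoidAlgebra.mapDomainLinearMap ℚ ℚ revm

lemma RF_single (w : FreeMonoid Bool) (q : ℚ) :
    RF (MonoidAlgebra.single w q) = MonoidAlgebra.single (revm w) q := by
  exact MonoidAlgebra.mapDomainLinearMap_single (R := ℚ) (S := ℚ) revm q w

lemma RF_mono (w : Mon) : RF (mono w) = mono w.reverse := by
  rw [mono, RF_single]; rfl

lemma single_eq_smul_mono (w : FreeMonoid Bool) (q : ℚ) :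
    (MonoidAlgebra.single w q : F) = q • mono (FreeMonoid.toList w) := by
  rw [mono]
  have : FreeMonoid.ofList (FreeMonoid.toList w) = w := rfl
  rw [this]
  rw [show (q • (MonoidAlgebra.single w 1 : F)) = MonoidAlgebra.single w (q • (1:ℚ)) from
    (MonoidAlgebra.smul_single q w 1)]
  simp

lemma G_single (w : FreeMonoid Bool) (q : ℚ) :
    G (MonoidAlgebra.single w q) = q • gMon (FreeMonoid.toList w) := by
  have h : G (MonoidAlgebra.single w q)
      = Finsupp.lsum ℚ (fun w => LinearMap.toSpanSingleton ℚ F (gMon (FreeMonoid.toList w)))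
          (Finsupp.single w q) := rfl
  rw [h, Finsupp.lsum_single]
  rfl

lemma G_mono (w : Mon) : G (mono w) = gMon w := by
  rw [mono, G_single]; simp

/-- `RF` is an anti-homomorphism. -/
lemma RF_mul (x y : F) : RF (x * y) = RF y * RF x := by
  induction x using MonoidAlgebra.induction_linear with
  | zero => simp
  | add a b ha hb => simp [add_mul, mul_add, ha, hb]
  | single w p =>
      induction y using MonoidAlgebra.induction_linear with
      | zero => simp
      | add a b ha hb => simp [add_mul, mul_add, ha, hb]
      | single u q =>
          rw [MonoidAlgebra.single_mul_single, RF_single, RF_single, RF_single,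
            MonoidAlgebra.single_mul_single]
          congr 1
          · show FreeMonoid.ofList ((FreeMonoid.toList w ++ FreeMonoid.toList u).reverse) = _
            rw [List.reverse_append]
            rfl
          · ring

/-- `G` is a derivation. -/
lemma G_mul (x y : F) : G (x * y) = G x * y + x * G y := by
  induction x using MonoidAlgebra.induction_linear with
  | zero => simp
  | add a b ha hb => simp only [add_mul, map_add, ha, hb]; abel
  | single w p =>
      induction y using MonoidAlgebra.induction_linear with
      | zero => simp
      | add a b ha hb => simp only [mul_add, map_add, ha, hb]; abel
      | single u q =>
          rw [MonoidAlgebra.single_mul_single, G_single, G_single, G_single,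
            single_eq_smul_mono, single_eq_smul_mono]
          have h3 : FreeMonoid.toList (w * u) = FreeMonoid.toList w ++ FreeMonoid.toList u := rfl
          rw [h3, gMon_append]
          simp only [smul_add, smul_smul, smul_mul_assoc, mul_smul_comm, mul_comm p q]

/-- Key lemma on monomials. -/
lemma key_mono (w : Mon) :
    RF (gMon w) = gMon w.reverse + mono w.reverse * cF - cF * mono w.reverse := by
  induction w with
  | nil => simp [gMon, mono_nil]
  | cons a t ih =>
      rw [gMon, map_add, RF_mul, RF_mul, RF_mono, RF_mono, ih,
        show (a :: t).reverse = t.reverse ++ [a] from by simp,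
        gMon_append, gMon_singleton, ← mono_mul]
      cases a with
      | false =>
          rw [show RF (gLetter false) = dF from by rw [gLetter, dF, RF_mono, List.reverse_singleton],
            gLetter, show mono [false] = cF from rfl]
          noncomm_ring
      | true =>
          rw [show RF (gLetter true) = dF * cF from by
              rw [gLetter, cF, dF, RF_mul, RF_mono, RF_mono, List.reverse_singleton,
                List.reverse_singleton],
            gLetter, show mono [true] = dF from rfl]
          noncomm_ring

/-- Key lemma, linear version. -/
lemma key (x : F) : RF (G x) = G (RF x) + RF x * cF - cF * RF x := by
  induction x using MonoidAlgebra.induction_linear with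
  | zero => simp
  | add a b ha hb =>
      simp only [map_add, ha, hb]
      noncomm_ring
  | single w q =>
      rw [G_single, RF_single, G_single, map_smul, key_mono (FreeMonoid.toList w),
        show FreeMonoid.toList (revm w) = (FreeMonoid.toList w).reverse from rfl,
        single_eq_smul_mono,
        show FreeMonoid.toList (revm w) = (FreeMonoid.toList w).reverse from rfl]
      rw [smul_sub, smul_add, smul_mul_assoc, mul_smul_comm]

lemma RF_one : RF (1 : F) = 1 := by
  rw [show (1 : F) = mono [] from rfl, RF_mono]; rfl

lemma RF_Psi (n : ℕ) : RF (Psi n) = Psi n := by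
  induction n with
  | zero => exact RF_one
  | succ n ih =>
      rw [Psi, map_add, RF_mul, key, ih, show RF cF = cF from by rw [cF, RF_mono, List.reverse_singleton]]
      noncomm_ring

lemma RF_apply (x : F) (w : Mon) :
    (RF x).coeff (FreeMonoid.ofList w.reverse) = x.coeff (FreeMonoid.ofList w) := by
  have h : (RF x).coeff = Finsupp.mapDomain revm x.coeff := rfl
  rw [h, show FreeMonoid.ofList w.reverse = revm (FreeMonoid.ofList w) from rfl]
  exact Finsupp.mapDomain_apply revm_inj x.coeff _

lemma deg_reverse (w : Mon) : deg w.reverse = deg w := by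
  simp [deg, List.count_reverse]

/-- The cd-index of the Boolean lattice is invariant under reversal
of monomials: `β(v) = β(v*)` for every cd-monomial `v`. -/
theorem beta_reverse (v : Mon) : beta v = beta v.reverse := by
  rw [beta, beta, deg_reverse, ← RF_apply (Psi (deg v)) v, RF_Psi]
end

section
/- The map S is a derivation on (F̂, •): S(u • v) = S(u) • v + u • S(v) for all u, v ∈ F̂; moreover S(1) = e and S(e) = 0. -/
open scoped TensorProduct

/-- `F̂ = ℚ·e ⊕ F`, with basis indexed by `Option Mon`; `none` is the element `e`. -/
abbrev Fhat := Option Mon →₀ ℚ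

noncomputable def ehat : Fhat := Finsupp.single none 1

/-- the inclusion `F → F̂`. -/
noncomputable def ι : F →ₗ[ℚ] Fhat :=
  (Finsupp.lsum ℚ fun w =>
    LinearMap.toSpanSingleton ℚ Fhat (Finsupp.single (some (FreeMonoid.toList w)) 1)) ∘ₗ (MonoidAlgebra.coeffLinearEquiv ℚ).toLinearMap

noncomputable def deltaLetter : Bool → F ⊗[ℚ] F
  | false => (2 : ℚ) • ((1 : F) ⊗ₜ (1 : F))
  | true  => (1 : F) ⊗ₜ cF + cF ⊗ₜ (1 : F)

/-- `Δ` on monomials, via `Δ(uv) = Δ(u)v + uΔ(v)`. -/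
noncomputable def deltaMon : Mon → F ⊗[ℚ] F
  | [] => 0
  | a :: t =>
      TensorProduct.map LinearMap.id (LinearMap.mulRight ℚ (mono t)) (deltaLetter a)
        + TensorProduct.map (LinearMap.mulLeft ℚ (mono [a])) LinearMap.id (deltaMon t)

noncomputable def deltaHatB : Option Mon → Fhat ⊗[ℚ] Fhat
  | none => ehat ⊗ₜ ehat
  | some w => TensorProduct.map ι ι (deltaMon w) + ehat ⊗ₜ ι (mono w) + ι (mono w) ⊗ₜ ehat

/-- The coproduct `Δ̂` on `F̂`. -/
noncomputable def deltaHat : Fhat →ₗ[ℚ] Fhat ⊗[ℚ] Fhat :=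
  Finsupp.lsum ℚ fun o => LinearMap.toSpanSingleton ℚ (Fhat ⊗[ℚ] Fhat) (deltaHatB o)

noncomputable def gHatB : Option Mon → Fhat
  | none => ι 1
  | some w => ι (gMon w + mono w * cF)

/-- The map `Ĝ` on `F̂`: `Ĝ e = 1`, `Ĝ u = G u + u c`. -/
noncomputable def gHat : Fhat →ₗ[ℚ] Fhat :=
  Finsupp.lsum ℚ fun o => LinearMap.toSpanSingleton ℚ Fhat (gHatB o)


/-- The cd-monomial `c^{m_1} d c^{m_2} d ⋯ d c^{m_k}` associated to the list
`(m_1, …, m_k)`. -/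
def ofExps : List ℕ → Mon
  | [] => []
  | [m] => List.replicate m false
  | m :: t => List.replicate m false ++ true :: ofExps t

/-- The list of exponents `(m_1, …, m_k)` of a cd-monomial
`c^{m_1} d c^{m_2} d ⋯ d c^{m_k}`. -/
def toExps : Mon → List ℕ
  | [] => [0]
  | false :: t =>
      match toExps t with
      | [] => [1]
      | m :: r => (m + 1) :: r
  | true :: t => 0 :: toExps t

/-- The product `•` on cd-monomials: writing `u = (M',m)` and `v = (n,N')` in
exponent-list notation, `u • v = (M',m−1,n,N') + (M',m,n−1,N') + 2(M',m+n+1,N')`. -/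
noncomputable def bulletMon (u v : Mon) : F :=
  (if (toExps u).getLast! = 0 then 0
    else mono (ofExps ((toExps u).dropLast ++ ((toExps u).getLast! - 1) :: toExps v)))
  + (if (toExps v).head! = 0 then 0
    else mono (ofExps (toExps u ++ ((toExps v).head! - 1) :: (toExps v).tail)))
  + (2 : ℚ) • mono (ofExps ((toExps u).dropLast ++
      ((toExps u).getLast! + (toExps v).head! + 1) :: (toExps v).tail))

/-- The bilinear extension of `•` to `F`. -/
noncomputable def bulletF : F →ₗ[ℚ] F →ₗ[ℚ] F :=
  (Finsupp.lsum ℚ fun u => LinearMap.toSpanSingleton ℚ (F →ₗ[ℚ] F)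
    ((Finsupp.lsum ℚ fun v =>
      LinearMap.toSpanSingleton ℚ F (bulletMon (FreeMonoid.toList u) (FreeMonoid.toList v))) ∘ₗ (MonoidAlgebra.coeffLinearEquiv ℚ).toLinearMap)) ∘ₗ (MonoidAlgebra.coeffLinearEquiv ℚ).toLinearMap

noncomputable def bulletHatB : Option Mon → Option Mon → Fhat
  | none, o => Finsupp.single o 1
  | o, none => Finsupp.single o 1
  | some u, some v => ι (bulletMon u v)

/-- The bilinear extension of `•` to `F̂`, with unit `e`. -/
noncomputable def bulletHat : Fhat →ₗ[ℚ] Fhat →ₗ[ℚ] Fhat :=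
  Finsupp.lsum ℚ fun o => LinearMap.toSpanSingleton ℚ (Fhat →ₗ[ℚ] Fhat)
    (Finsupp.lsum ℚ fun p => LinearMap.toSpanSingleton ℚ Fhat (bulletHatB o p))

/-- The part of `S` lying in `F`, defined on exponent lists by
`S(m_1,…,m_k) = Σ_i (m_1,…,m_i−1,…,m_k) + Σ_{i<k} (m_1,…,m_i+m_{i+1}+1,…,m_k)`,
terms with a negative entry being omitted. -/
noncomputable def SexpF : List ℕ → F
  | [] => 0
  | [m] => if m = 0 then 0 else mono (List.replicate (m - 1) false)
  | m :: n :: t =>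
      (if m = 0 then 0 else mono (ofExps ((m - 1) :: n :: t)))
        + mono (ofExps ((m + n + 1) :: t))
        + mono (List.replicate m false ++ [true]) * SexpF (n :: t)

/-- The map `S` on cd-monomials, with values in `F̂` (note `S(1) = e`). -/
noncomputable def Smap (w : Mon) : Fhat :=
  ι (SexpF (toExps w)) + (if w = [] then ehat else 0)

/-- The linear extension of `S` to `F̂`, with `S(e) = 0`. -/
noncomputable def SHat : Fhat →ₗ[ℚ] Fhat :=
  Finsupp.lsum ℚ fun o =>
    LinearMap.toSpanSingleton ℚ Fhat (match o with | none => 0 | some w => Smap w)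

namespace SDer

noncomputable def tl (m : ℕ) : F := mono (List.replicate m false)
noncomputable def pr (a : ℕ) : F := mono (List.replicate a false ++ [true])

lemma mono_append (x y : Mon) : mono (x ++ y) = mono x * mono y := by
  simp [mono, MonoidAlgebra.single_mul_single]

lemma mono_nil : mono ([] : Mon) = 1 := rfl

lemma tl_zero : tl 0 = 1 := rfl

lemma tl_mul_tl (a b : ℕ) : tl a * tl b = tl (a + b) := by
  rw [tl, tl, tl, ← mono_append, ← List.replicate_add]

lemma tl_mul_pr (a b : ℕ) : tl a * pr b = pr (a + b) := by
  rw [tl, pr, pr, ← mono_append, ← List.append_assoc, ← List.replicate_add]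

-- exponent list lemmas
lemma toExps_ne_nil (w : Mon) : toExps w ≠ [] := by
  induction w with
  | nil => simp [toExps]
  | cons a t ih =>
    cases a <;> simp [toExps]
    cases h : toExps t with
    | nil => exact absurd h ih
    | cons m r => simp

lemma toExps_cons_exists (w : Mon) : ∃ h T, toExps w = h :: T := by
  cases h : toExps w with
  | nil => exact absurd h (toExps_ne_nil w)
  | cons a t => exact ⟨a, t, rfl⟩

lemma toExps_false_cons (w : Mon) (h : ℕ) (T : List ℕ) (hw : toExps w = h :: T) :
    toExps (false :: w) = (h+1) :: T := by
  simp [toExps, hw]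

lemma toExps_true_cons (w : Mon) : toExps (true :: w) = 0 :: toExps w := by
  simp [toExps]

lemma toExps_replicate (m : ℕ) : toExps (List.replicate m false) = [m] := by
  induction m with
  | zero => rfl
  | succ n ih => rw [List.replicate_succ]; rw [toExps_false_cons _ n [] ih]

lemma toExps_replicate_append (k : ℕ) (w : Mon) (h : ℕ) (T : List ℕ) (hw : toExps w = h :: T) :
    toExps (List.replicate k false ++ w) = (k + h) :: T := by
  induction k with
  | zero => simpa using hw
  | succ n ih =>
    rw [List.replicate_succ, List.cons_append, toExps_false_cons _ (n+h) T ih]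
    ring_nf

lemma toExps_pr_append (a : ℕ) (w : Mon) :
    toExps (List.replicate a false ++ true :: w) = a :: toExps w := by
  have := toExps_replicate_append a (true :: w) 0 (toExps w) (toExps_true_cons w)
  simpa using this

lemma ofExps_cons_cons (m n : ℕ) (t : List ℕ) :
    ofExps (m :: n :: t) = List.replicate m false ++ true :: ofExps (n :: t) := by
  rfl

lemma ofExps_succ_head (h : ℕ) (T : List ℕ) :
    ofExps ((h+1) :: T) = false :: ofExps (h :: T) := by
  cases T with
  | nil => simp [ofExps, List.replicate_succ]
  | cons t T' => rw [ofExps_cons_cons, ofExps_cons_cons, List.replicate_succ, List.cons_append]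

lemma ofExps_add_head (k h : ℕ) (T : List ℕ) :
    ofExps ((k + h) :: T) = List.replicate k false ++ ofExps (h :: T) := by
  induction k with
  | zero => simp
  | succ n ih =>
    have : n + 1 + h = (n + h) + 1 := by ring
    rw [this, ofExps_succ_head, ih, List.replicate_succ, List.cons_append]

lemma ofExps_toExps (w : Mon) : ofExps (toExps w) = w := by
  induction w with
  | nil => rfl
  | cons a t ih =>
    obtain ⟨h, T, hT⟩ := toExps_cons_exists t
    cases a
    · rw [toExps_false_cons t h T hT, ofExps_succ_head, ← hT, ih]
    · rw [toExps_true_cons, hT]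
      rw [ofExps_cons_cons]  -- needs 0 :: h :: T shape; T might be [] though! ofExps (0 :: h :: T) fine
      rw [← hT, ih]
      simp

lemma mono_ofExps_cons (x h : ℕ) (T : List ℕ) :
    mono (ofExps (x :: h :: T)) = pr x * mono (ofExps (h :: T)) := by
  rw [ofExps_cons_cons, pr, ← mono_append]
  simp

lemma mono_ofExps_add_head (k h : ℕ) (T : List ℕ) :
    mono (ofExps ((k + h) :: T)) = tl k * mono (ofExps (h :: T)) := by
  rw [ofExps_add_head, tl, ← mono_append]

lemma word_decomp (u : Mon) :
    (∃ m, u = List.replicate m false) ∨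
      ∃ a u₂, u = List.replicate a false ++ true :: u₂ := by
  induction u with
  | nil => exact Or.inl ⟨0, rfl⟩
  | cons b t ih =>
    cases b
    · rcases ih with ⟨m, rfl⟩ | ⟨a, u₂, rfl⟩
      · exact Or.inl ⟨m+1, by rw [List.replicate_succ]⟩
      · exact Or.inr ⟨a+1, u₂, by rw [List.replicate_succ, List.cons_append]⟩
    · exact Or.inr ⟨0, t, rfl⟩

end SDer
namespace SDer

/-- linear extension of `SexpF ∘ toExps`. -/
noncomputable def Sp : F →ₗ[ℚ] F :=
  (Finsupp.lsum ℚ fun w => LinearMap.toSpanSingleton ℚ F (SexpF (toExps (FreeMonoid.toList w)))) ∘ₗ (MonoidAlgebra.coeffLinearEquiv ℚ).toLinearMap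

/-- delete a leading `c`. -/
noncomputable def dc : F →ₗ[ℚ] F :=
  (Finsupp.lsum ℚ fun w => LinearMap.toSpanSingleton ℚ F
    (match FreeMonoid.toList w with | false :: t => mono t | _ => 0)) ∘ₗ (MonoidAlgebra.coeffLinearEquiv ℚ).toLinearMap

/-- delete a leading `d`. -/
noncomputable def dd : F →ₗ[ℚ] F :=
  (Finsupp.lsum ℚ fun w => LinearMap.toSpanSingleton ℚ F
    (match FreeMonoid.toList w with | true :: t => mono t | _ => 0)) ∘ₗ (MonoidAlgebra.coeffLinearEquiv ℚ).toLinearMap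

/-- coefficient of the empty word. -/
noncomputable def Ee : F →ₗ[ℚ] ℚ :=
  (Finsupp.lsum ℚ fun w => LinearMap.toSpanSingleton ℚ ℚ
    (if FreeMonoid.toList w = [] then 1 else 0)) ∘ₗ (MonoidAlgebra.coeffLinearEquiv ℚ).toLinearMap

lemma lsum_mono_apply {M : Type} [AddCommMonoid M] [Module ℚ M]
    (g : FreeMonoid Bool → M) (w : Mon) :
    (show F →ₗ[ℚ] M from (Finsupp.lsum ℚ fun x => LinearMap.toSpanSingleton ℚ M (g x)) ∘ₗ (MonoidAlgebra.coeffLinearEquiv ℚ).toLinearMap) (mono w)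
      = g (FreeMonoid.ofList w) := by
  show Finsupp.lsum ℚ (fun x => LinearMap.toSpanSingleton ℚ M (g x))
      (Finsupp.single (FreeMonoid.ofList w) (1:ℚ)) = _
  rw [Finsupp.lsum_single]; simp

lemma single_eq_smul_mono (a : FreeMonoid Bool) (b : ℚ) :
    (MonoidAlgebra.single a b : F) = b • mono (FreeMonoid.toList a) := by
  simp [mono, MonoidAlgebra.smul_single]

lemma lin_ext {M : Type} [AddCommMonoid M] [Module ℚ M] {φ ψ : F →ₗ[ℚ] M}
    (h : ∀ w : Mon, φ (mono w) = ψ (mono w)) (f : F) : φ f = ψ f := by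
  revert f
  suffices hh : φ = ψ by intro f; rw [hh]
  apply MonoidAlgebra.lhom_ext'; intro a; apply LinearMap.ext; intro b
  simp only [LinearMap.comp_apply, MonoidAlgebra.lsingle_apply]
  rw [single_eq_smul_mono, map_smul, map_smul]
  exact congrArg (HSMul.hSMul b) (h _)

@[simp] lemma Sp_mono (w : Mon) : Sp (mono w) = SexpF (toExps w) := by
  have := lsum_mono_apply (M := F)
    (fun x => SexpF (toExps (FreeMonoid.toList x))) w
  simp only [FreeMonoid.toList_ofList] at this
  exact this

@[simp] lemma dc_mono (w : Mon) :
    dc (mono w) = (match w with | false :: t => mono t | _ => 0) := by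
  have := lsum_mono_apply (M := F)
    (fun x => match FreeMonoid.toList x with | false :: t => mono t | _ => 0) w
  simp only [FreeMonoid.toList_ofList] at this
  exact this

@[simp] lemma dd_mono (w : Mon) :
    dd (mono w) = (match w with | true :: t => mono t | _ => 0) := by
  have := lsum_mono_apply (M := F)
    (fun x => match FreeMonoid.toList x with | true :: t => mono t | _ => 0) w
  simp only [FreeMonoid.toList_ofList] at this
  exact this

@[simp] lemma Ee_mono (w : Mon) : Ee (mono w) = if w = [] then 1 else 0 := by
  have := lsum_mono_apply (M := ℚ)
    (fun x => if FreeMonoid.toList x = [] then (1:ℚ) else 0) w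
  simp only [FreeMonoid.toList_ofList] at this
  exact this

@[simp] lemma Bul_mono (u v : Mon) : bulletF (mono u) (mono v) = bulletMon u v := by
  have h1 := lsum_mono_apply (M := F →ₗ[ℚ] F)
    (fun x => (Finsupp.lsum ℚ fun y =>
      LinearMap.toSpanSingleton ℚ F (bulletMon (FreeMonoid.toList x) (FreeMonoid.toList y))) ∘ₗ (MonoidAlgebra.coeffLinearEquiv ℚ).toLinearMap) u
  have h2 : bulletF (mono u) = (show F →ₗ[ℚ] F from (Finsupp.lsum ℚ fun y =>
      LinearMap.toSpanSingleton ℚ F (bulletMon u (FreeMonoid.toList y))) ∘ₗ (MonoidAlgebra.coeffLinearEquiv ℚ).toLinearMap) := by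
    simp only [FreeMonoid.toList_ofList] at h1
    exact h1
  rw [h2]
  have := lsum_mono_apply (M := F) (fun y => bulletMon u (FreeMonoid.toList y)) v
  simp only [FreeMonoid.toList_ofList] at this
  exact this

end SDer
namespace SDer

lemma cF_eq : cF = tl 1 := rfl
lemma dF_eq : dF = pr 0 := rfl

lemma SexpF_single (m : ℕ) :
    SexpF [m] = if m = 0 then 0 else mono (List.replicate (m-1) false) := rfl

lemma SexpF_cons (m n : ℕ) (t : List ℕ) :
    SexpF (m :: n :: t) = (if m = 0 then 0 else mono (ofExps ((m-1) :: n :: t)))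
      + mono (ofExps ((m+n+1) :: t))
      + mono (List.replicate m false ++ [true]) * SexpF (n :: t) := rfl

lemma pr_mul_mono (a : ℕ) (v : Mon) :
    pr a * mono v = mono (List.replicate a false ++ true :: v) := by
  rw [pr, ← mono_append, List.append_assoc, List.singleton_append]

lemma tl_mul_mono (k : ℕ) (v : Mon) :
    tl k * mono v = mono (List.replicate k false ++ v) := by
  rw [tl, ← mono_append]

lemma mono_ofExps_cons' (x : ℕ) {L : List ℕ} (hL : L ≠ []) :
    mono (ofExps (x :: L)) = pr x * mono (ofExps L) := by
  obtain ⟨h, T, rfl⟩ := List.exists_cons_of_ne_nil hL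
  exact mono_ofExps_cons x h T

/-- `Sp (c^a d · f)` -/
lemma Sp_pr_mono (a : ℕ) (v : Mon) :
    Sp (pr a * mono v) = (if a = 0 then 0 else pr (a-1) * mono v)
      + tl (a+1) * mono v + pr a * Sp (mono v) := by
  obtain ⟨h, T, hT⟩ := toExps_cons_exists v
  rw [pr_mul_mono, Sp_mono, toExps_pr_append, hT, SexpF_cons]
  have hv : mono (ofExps (h :: T)) = mono v := by rw [← hT, ofExps_toExps]
  congr 1
  · congr 1
    · split
      · rfl
      · rw [mono_ofExps_cons' (a-1) (List.cons_ne_nil h T), hv]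
    · have : a + h + 1 = (a+1) + h := by ring
      rw [this, mono_ofExps_add_head, hv]
  · rw [Sp_mono, hT, pr]

lemma Sp_pr_zero (f : F) : Sp (pr 0 * f) = tl 1 * f + pr 0 * Sp f := by
  have := lin_ext (φ := Sp ∘ₗ LinearMap.mulLeft ℚ (pr 0))
    (ψ := LinearMap.mulLeft ℚ (tl 1) + LinearMap.mulLeft ℚ (pr 0) ∘ₗ Sp) ?_ f
  · simpa using this
  · intro w
    have := Sp_pr_mono 0 w
    simpa using this

lemma Sp_pr_succ (a : ℕ) (f : F) :
    Sp (pr (a+1) * f) = pr a * f + tl (a+2) * f + pr (a+1) * Sp f := by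
  have := lin_ext (φ := Sp ∘ₗ LinearMap.mulLeft ℚ (pr (a+1)))
    (ψ := LinearMap.mulLeft ℚ (pr a) + LinearMap.mulLeft ℚ (tl (a+2))
      + LinearMap.mulLeft ℚ (pr (a+1)) ∘ₗ Sp) ?_ f
  · simpa [add_assoc] using this
  · intro w
    have := Sp_pr_mono (a+1) w
    simpa [add_assoc] using this

lemma Sp_one : Sp 1 = 0 := by
  rw [← mono_nil, Sp_mono]; rfl

lemma Sp_tl_succ (m : ℕ) : Sp (tl (m+1)) = tl m := by
  rw [tl, Sp_mono, toExps_replicate, SexpF_single]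
  simp [tl]

end SDer
namespace SDer

lemma dc_one : dc 1 = 0 := by rw [← mono_nil, dc_mono]
lemma dd_one : dd 1 = 0 := by rw [← mono_nil, dd_mono]
@[simp] lemma Ee_one : Ee 1 = 1 := by rw [← mono_nil, Ee_mono]; simp

lemma dc_tl_zero : dc (tl 0) = 0 := by rw [tl_zero, dc_one]
lemma dc_tl_succ (m : ℕ) : dc (tl (m+1)) = tl m := by
  rw [tl, List.replicate_succ, dc_mono]; rfl

lemma dd_tl (m : ℕ) : dd (tl m) = 0 := by
  cases m with
  | zero => rw [tl_zero, dd_one]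
  | succ n => rw [tl, List.replicate_succ, dd_mono]

lemma Ee_tl_succ (m : ℕ) : Ee (tl (m+1)) = 0 := by
  rw [tl, List.replicate_succ, Ee_mono]; simp

lemma dc_pr_zero (f : F) : dc (pr 0 * f) = 0 := by
  have := lin_ext (φ := dc ∘ₗ LinearMap.mulLeft ℚ (pr 0)) (ψ := 0) ?_ f
  · simpa using this
  · intro w; simp [pr_mul_mono, dc_mono]

lemma dc_pr_succ (a : ℕ) (f : F) : dc (pr (a+1) * f) = pr a * f := by
  have := lin_ext (φ := dc ∘ₗ LinearMap.mulLeft ℚ (pr (a+1)))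
    (ψ := LinearMap.mulLeft ℚ (pr a)) ?_ f
  · simpa using this
  · intro w
    simp only [LinearMap.comp_apply, LinearMap.mulLeft_apply, pr_mul_mono, dc_mono,
      List.replicate_succ, List.cons_append]

lemma dc_tl_succ_mul (m : ℕ) (f : F) : dc (tl (m+1) * f) = tl m * f := by
  have := lin_ext (φ := dc ∘ₗ LinearMap.mulLeft ℚ (tl (m+1)))
    (ψ := LinearMap.mulLeft ℚ (tl m)) ?_ f
  · simpa using this
  · intro w
    simp only [LinearMap.comp_apply, LinearMap.mulLeft_apply, tl_mul_mono, dc_mono,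
      List.replicate_succ, List.cons_append]

lemma dd_pr_zero (f : F) : dd (pr 0 * f) = f := by
  have := lin_ext (φ := dd ∘ₗ LinearMap.mulLeft ℚ (pr 0)) (ψ := LinearMap.id) ?_ f
  · simpa using this
  · intro w; simp [pr_mul_mono, dd_mono, mono_nil]

lemma dd_pr_succ (a : ℕ) (f : F) : dd (pr (a+1) * f) = 0 := by
  have := lin_ext (φ := dd ∘ₗ LinearMap.mulLeft ℚ (pr (a+1))) (ψ := 0) ?_ f
  · simpa using this
  · intro w
    simp only [LinearMap.comp_apply, LinearMap.mulLeft_apply, pr_mul_mono, dd_mono,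
      List.replicate_succ, List.cons_append, LinearMap.zero_apply]

lemma dd_tl_succ_mul (m : ℕ) (f : F) : dd (tl (m+1) * f) = 0 := by
  have := lin_ext (φ := dd ∘ₗ LinearMap.mulLeft ℚ (tl (m+1))) (ψ := 0) ?_ f
  · simpa using this
  · intro w
    simp only [LinearMap.comp_apply, LinearMap.mulLeft_apply, tl_mul_mono, dd_mono,
      List.replicate_succ, List.cons_append, LinearMap.zero_apply]

lemma Ee_pr (a : ℕ) (f : F) : Ee (pr a * f) = 0 := by
  have := lin_ext (φ := Ee ∘ₗ LinearMap.mulLeft ℚ (pr a)) (ψ := 0) ?_ f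
  · simpa using this
  · intro w; simp [pr_mul_mono, Ee_mono]

lemma Ee_tl_succ_mul (m : ℕ) (f : F) : Ee (tl (m+1) * f) = 0 := by
  have := lin_ext (φ := Ee ∘ₗ LinearMap.mulLeft ℚ (tl (m+1))) (ψ := 0) ?_ f
  · simpa using this
  · intro w
    simp [tl_mul_mono, Ee_mono, List.replicate_succ]

/-- decomposition by leading letter -/
lemma decomp (f : F) : f = cF * dc f + dF * dd f + Ee f • 1 := by
  have := lin_ext (φ := LinearMap.id (R := ℚ) (M := F))
    (ψ := LinearMap.mulLeft ℚ cF ∘ₗ dc + LinearMap.mulLeft ℚ dF ∘ₗ dd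
      + (LinearMap.toSpanSingleton ℚ F 1) ∘ₗ Ee) ?_ f
  · simpa using this
  · intro w
    simp only [LinearMap.id_apply, LinearMap.add_apply, LinearMap.comp_apply,
      LinearMap.mulLeft_apply, LinearMap.toSpanSingleton_apply, dc_mono, dd_mono, Ee_mono]
    match w with
    | [] => simp [mono_nil]
    | false :: t =>
      have : cF * mono t = mono (false :: t) := by
        rw [cF]; rw [← mono_append]; rfl
      simp [this]
    | true :: t =>
      have : dF * mono t = mono (true :: t) := by
        rw [dF]; rw [← mono_append]; rfl
      simp [this]

end SDer
namespace SDer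

lemma pr_def (a : ℕ) : pr a = mono (List.replicate a false ++ [true]) := rfl

lemma Sp_tl_mono (n : ℕ) (w : Mon) :
    Sp (tl (n+1) * mono w)
      = tl (n+1) * Sp (mono w) + tl n * (mono w - cF * dc (mono w)) := by
  obtain ⟨h, T, hT⟩ := toExps_cons_exists w
  have hw : mono (ofExps (h :: T)) = mono w := by rw [← hT, ofExps_toExps]
  rw [tl_mul_mono, Sp_mono, toExps_replicate_append (n+1) w h T hT]
  cases T with
  | nil =>
    have hw' : w = List.replicate h false := by
      rw [← ofExps_toExps w, hT]; rfl
    subst hw'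
    rw [SexpF_single]
    simp only [Nat.add_eq_zero, and_false, if_false, Nat.succ_ne_zero, false_and]
    cases h with
    | zero =>
      rw [show n + 1 + 0 - 1 = n from rfl]
      simp only [List.replicate_zero, mono_nil, Sp_one, dc_one]
      simp [tl]
    | succ h' =>
      rw [show mono (List.replicate (h'+1) false) = tl (h'+1) from rfl,
        Sp_tl_succ, dc_tl_succ, cF_eq]
      simp only [tl_mul_tl]
      rw [show (1 + h' : ℕ) = h' + 1 from by omega, sub_self, mul_zero, add_zero,
        show n + 1 + (h'+1) - 1 = n + 1 + h' from by omega]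
      rfl
  | cons t T' =>
    rw [SexpF_cons]
    simp only [Nat.add_eq_zero, and_false, if_false, Nat.succ_ne_zero, false_and]
    cases h with
    | zero =>
      have hw0 : w = true :: ofExps (t :: T') := by
        rw [← ofExps_toExps w, hT]; rfl
      have hdc : dc (mono w) = 0 := by rw [hw0, dc_mono]
      have hSp : Sp (mono w) = mono (ofExps ((t+1) :: T')) + pr 0 * SexpF (t :: T') := by
        rw [Sp_mono, hT, SexpF_cons]
        simp [pr_def, show 0 + t + 1 = t + 1 from by omega]
      rw [hdc, mul_zero, sub_zero, hSp, mul_add]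
      simp only [Nat.add_zero]
      rw [show (n + 1 + t + 1 : ℕ) = (n+1) + (t+1) from by omega,
        mono_ofExps_add_head (n+1) (t+1) T']
      rw [← pr_def (n+1), ← mul_assoc, tl_mul_pr]
      simp only [Nat.add_zero]
      rw [show (n + 1 - 1 : ℕ) = n + 0 from rfl, mono_ofExps_add_head n 0 (t :: T'), hw]
      abel
    | succ h' =>
      have hw1 : w = false :: ofExps (h' :: t :: T') := by
        rw [← ofExps_toExps w, hT, ofExps_succ_head]
      have hdc : cF * dc (mono w) = mono w := by
        rw [hw1, dc_mono, cF, ← mono_append]; rfl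
      have hSp : Sp (mono w) = mono (ofExps (h' :: t :: T'))
          + mono (ofExps ((h' + t + 2) :: T')) + pr (h'+1) * SexpF (t :: T') := by
        rw [Sp_mono, hT, SexpF_cons]
        simp [pr_def, show h' + 1 - 1 = h' from rfl, show h' + 1 + t + 1 = h' + t + 2 from by omega]
      rw [hdc, sub_self, mul_zero, add_zero, hSp]
      rw [mul_add, mul_add]
      rw [show (n + 1 + (h'+1) - 1 : ℕ) = (n+1) + h' from by omega,
        mono_ofExps_add_head (n+1) h' (t :: T')]
      rw [show (n + 1 + (h'+1) + t + 1 : ℕ) = (n+1) + (h' + t + 2) from by omega,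
        mono_ofExps_add_head (n+1) (h'+t+2) T']
      rw [← pr_def (n+1+(h'+1)),
        show (n + 1 + (h'+1) : ℕ) = (n+1) + (h'+1) from by omega, ← tl_mul_pr (n+1) (h'+1)]
      rw [mul_assoc]

lemma Sp_tl_mul (n : ℕ) (f : F) :
    Sp (tl (n+1) * f) = tl (n+1) * Sp f + tl n * (f - cF * dc f) := by
  have := lin_ext (φ := Sp ∘ₗ LinearMap.mulLeft ℚ (tl (n+1)))
    (ψ := LinearMap.mulLeft ℚ (tl (n+1)) ∘ₗ Sp
      + LinearMap.mulLeft ℚ (tl n) ∘ₗ (LinearMap.id - LinearMap.mulLeft ℚ cF ∘ₗ dc)) ?_ f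
  · simpa using this
  · intro w
    simpa using Sp_tl_mono n w

end SDer
namespace SDer

lemma dcSp (f : F) : dc (Sp f) = Sp (dc f) + dd f := by
  have := lin_ext (φ := dc ∘ₗ Sp) (ψ := Sp ∘ₗ dc + dd) ?_ f
  · simpa using this
  · intro w
    simp only [LinearMap.comp_apply, LinearMap.add_apply]
    rcases word_decomp w with ⟨m, rfl⟩ | ⟨a, u₂, rfl⟩
    · match m with
      | 0 => simp only [List.replicate_zero, mono_nil, Sp_one, dc_one, dd_one, map_zero, add_zero]
      | 1 =>
        rw [show mono (List.replicate 1 false) = tl 1 from rfl, Sp_tl_succ, dc_tl_succ,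
          tl_zero, dc_one, Sp_one, dd_tl]
        simp
      | (m+2) =>
        rw [show mono (List.replicate (m+2) false) = tl (m+2) from rfl, Sp_tl_succ, dc_tl_succ,
          dc_tl_succ, Sp_tl_succ, dd_tl, add_zero]
    · rw [← pr_mul_mono]
      set f := mono u₂ with hf
      match a with
      | 0 =>
        rw [Sp_pr_zero, map_add, dc_tl_succ_mul, dc_pr_zero, dc_pr_zero, map_zero,
          dd_pr_zero, tl_zero, one_mul]
        abel
      | 1 =>
        rw [Sp_pr_succ, map_add, map_add, dc_pr_zero, dc_tl_succ_mul, dc_pr_succ,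
          dc_pr_succ, Sp_pr_zero, dd_pr_succ]
        abel
      | (a+2) =>
        rw [Sp_pr_succ, map_add, map_add, dc_pr_succ, dc_tl_succ_mul, dc_pr_succ,
          dc_pr_succ, Sp_pr_succ, dd_pr_succ]
        abel

end SDer
namespace SDer

lemma bulletMon_def (u v : Mon) : bulletMon u v =
    (if (toExps u).getLast! = 0 then 0
      else mono (ofExps ((toExps u).dropLast ++ ((toExps u).getLast! - 1) :: toExps v)))
    + (if (toExps v).head! = 0 then 0
      else mono (ofExps (toExps u ++ ((toExps v).head! - 1) :: (toExps v).tail)))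
    + (2 : ℚ) • mono (ofExps ((toExps u).dropLast ++
        ((toExps u).getLast! + (toExps v).head! + 1) :: (toExps v).tail)) := rfl

lemma getLast!_cons_cons (a h : ℕ) (T : List ℕ) :
    (a::h::T : List ℕ).getLast! = (h::T).getLast! := by
  rw [List.getLast!_cons_eq_getLastD, List.getLast!_cons_eq_getLastD, List.getLastD_cons]

lemma dc_mono_ofExps (h : ℕ) (T : List ℕ) :
    dc (mono (ofExps (h :: T))) = if h = 0 then 0 else mono (ofExps ((h-1) :: T)) := by
  cases h with
  | zero =>
    cases T with
    | nil => rw [show ofExps [0] = [] from rfl, mono_nil, dc_one]; simp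
    | cons t T' =>
      rw [ofExps_cons_cons, List.replicate_zero, List.nil_append, dc_mono]
      simp
  | succ h' =>
    rw [ofExps_succ_head, dc_mono]
    simp

lemma Bul_tl_zero_mono (v : Mon) :
    bulletF 1 (mono v) = pr 0 * dc (mono v) + (2:ℚ) • (tl 1 * mono v) := by
  obtain ⟨h, T, hT⟩ := toExps_cons_exists v
  have hv : mono (ofExps (h :: T)) = mono v := by rw [← hT, ofExps_toExps]
  rw [← mono_nil, Bul_mono, bulletMon_def, show toExps ([] : Mon) = [0] from rfl, hT]
  rw [show ([0] : List ℕ).getLast! = 0 from rfl, if_pos rfl,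
    show ([0] : List ℕ).dropLast = [] from rfl,
    show (h::T).head! = h from rfl, show (h::T).tail = T from rfl]
  rw [show ([0] : List ℕ) ++ (h-1) :: T = 0 :: (h-1) :: T from rfl,
    List.nil_append,
    show (0 + h + 1 : ℕ) = 1 + h from by omega, mono_ofExps_add_head 1 h T, hv,
    ← hv, dc_mono_ofExps]
  split_ifs with hh
  · simp
  · rw [mono_ofExps_cons]
    abel

lemma Bul_tl_succ_mono (m : ℕ) (v : Mon) :
    bulletF (tl (m+1)) (mono v)
      = pr m * mono v + pr (m+1) * dc (mono v) + (2:ℚ) • (tl (m+2) * mono v) := by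
  obtain ⟨h, T, hT⟩ := toExps_cons_exists v
  have hv : mono (ofExps (h :: T)) = mono v := by rw [← hT, ofExps_toExps]
  rw [tl, Bul_mono, bulletMon_def, toExps_replicate, hT]
  rw [show ([m+1] : List ℕ).getLast! = m+1 from rfl,
    show ([m+1] : List ℕ).dropLast = [] from rfl,
    show (h::T).head! = h from rfl, show (h::T).tail = T from rfl]
  simp only [Nat.succ_ne_zero, if_false, List.nil_append, Nat.add_sub_cancel]
  rw [show ([m+1] : List ℕ) ++ (h-1) :: T = (m+1) :: (h-1) :: T from rfl]
  rw [mono_ofExps_cons m h T, hv,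
    show (m + 1 + h + 1 : ℕ) = (m+2) + h from by omega, mono_ofExps_add_head (m+2) h T, hv,
    ← hv, dc_mono_ofExps]
  split_ifs with hh
  · simp
  · rw [mono_ofExps_cons]

lemma Bul_tl_zero (g : F) : bulletF 1 g = pr 0 * dc g + (2:ℚ) • (tl 1 * g) := by
  have := lin_ext (φ := bulletF 1)
    (ψ := LinearMap.mulLeft ℚ (pr 0) ∘ₗ dc + (2:ℚ) • LinearMap.mulLeft ℚ (tl 1)) ?_ g
  · simpa using this
  · intro w; simpa using Bul_tl_zero_mono w

lemma Bul_tl_succ (m : ℕ) (g : F) :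
    bulletF (tl (m+1)) g = pr m * g + pr (m+1) * dc g + (2:ℚ) • (tl (m+2) * g) := by
  have := lin_ext (φ := bulletF (tl (m+1)))
    (ψ := LinearMap.mulLeft ℚ (pr m) + LinearMap.mulLeft ℚ (pr (m+1)) ∘ₗ dc
      + (2:ℚ) • LinearMap.mulLeft ℚ (tl (m+2))) ?_ g
  · simpa [add_assoc] using this
  · intro w; simpa [add_assoc] using Bul_tl_succ_mono m w

end SDer
namespace SDer

lemma Bul_pr_mono (a : ℕ) (u v : Mon) :
    bulletF (pr a * mono u) (mono v) = pr a * bulletF (mono u) (mono v) := by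
  obtain ⟨h, T, hT⟩ := toExps_cons_exists u
  rw [pr_mul_mono, Bul_mono, Bul_mono, bulletMon_def, bulletMon_def, toExps_pr_append, hT,
    getLast!_cons_cons a h T,
    show ((a :: h :: T : List ℕ)).dropLast = a :: (h::T).dropLast from rfl,
]
  simp only [List.cons_append]
  rw [mul_add, mul_add, mul_smul_comm, mul_ite, mul_zero, mul_ite, mul_zero]
  rw [mono_ofExps_cons' a (show (h::T).dropLast ++ ((h::T).getLast! - 1) :: toExps v ≠ []
      from by simp),
    mono_ofExps_cons a h (T ++ ((toExps v).head! - 1) :: (toExps v).tail),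
    mono_ofExps_cons' a (show (h::T).dropLast ++
      ((h::T).getLast! + (toExps v).head! + 1) :: (toExps v).tail ≠ [] from by simp)]

lemma Bul_pr_right (a : ℕ) (f : F) (v : Mon) :
    bulletF (pr a * f) (mono v) = pr a * bulletF f (mono v) := by
  have := lin_ext (φ := (bulletF.flip (mono v)) ∘ₗ LinearMap.mulLeft ℚ (pr a))
    (ψ := LinearMap.mulLeft ℚ (pr a) ∘ₗ bulletF.flip (mono v)) ?_ f
  · simpa using this
  · intro w; simpa using Bul_pr_mono a w v

lemma Bul_pr (a : ℕ) (f g : F) :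
    bulletF (pr a * f) g = pr a * bulletF f g := by
  have := lin_ext (φ := bulletF (pr a * f))
    (ψ := LinearMap.mulLeft ℚ (pr a) ∘ₗ bulletF f) ?_ g
  · simpa using this
  · intro w; simpa using Bul_pr_right a f w

lemma Bul_tl_mul (n : ℕ) (f g : F) :
    bulletF (tl (n+1) * f) g = tl (n+1) * bulletF f g + Ee f • (pr n * g) := by
  have := lin_ext (φ := (bulletF.flip g) ∘ₗ LinearMap.mulLeft ℚ (tl (n+1)))
    (ψ := LinearMap.mulLeft ℚ (tl (n+1)) ∘ₗ bulletF.flip g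
      + (LinearMap.toSpanSingleton ℚ F (pr n * g)) ∘ₗ Ee) ?_ f
  · simpa using this
  · intro w
    simp only [LinearMap.comp_apply, LinearMap.add_apply, LinearMap.mulLeft_apply,
      LinearMap.flip_apply, LinearMap.toSpanSingleton_apply]
    rcases word_decomp w with ⟨k, rfl⟩ | ⟨b, u₂, rfl⟩
    · match k with
      | 0 =>
        rw [List.replicate_zero, mono_nil, mul_one, Ee_one, one_smul, Bul_tl_succ,
          Bul_tl_zero, mul_add, mul_smul_comm, ← mul_assoc, ← mul_assoc, tl_mul_pr,
          tl_mul_tl]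
        abel
      | (k+1) =>
        rw [show mono (List.replicate (k+1) false) = tl (k+1) from rfl, tl_mul_tl,
          Ee_tl_succ, zero_smul, add_zero,
          show (n + 1 + (k+1) : ℕ) = (n+k+1) + 1 from by omega, Bul_tl_succ, Bul_tl_succ,
          mul_add, mul_add, mul_smul_comm, ← mul_assoc, ← mul_assoc, ← mul_assoc,
          tl_mul_pr, tl_mul_pr, tl_mul_tl,
          show (n + 1 + k : ℕ) = n + k + 1 from by omega,
          show (n + 1 + (k+1) : ℕ) = n + k + 1 + 1 from by omega,
          show (n + 1 + (k+2) : ℕ) = n + k + 1 + 2 from by omega]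
    · rw [← pr_mul_mono, ← mul_assoc, tl_mul_pr, Bul_pr, Bul_pr, Ee_pr, zero_smul, add_zero,
        ← mul_assoc, tl_mul_pr]

lemma E_Bul (f g : F) : Ee (bulletF f g) = 0 := by
  have := lin_ext (φ := Ee ∘ₗ bulletF.flip g) (ψ := 0) ?_ f
  · simpa using this
  · intro w
    simp only [LinearMap.comp_apply, LinearMap.flip_apply, LinearMap.zero_apply]
    rcases word_decomp w with ⟨k, rfl⟩ | ⟨b, u₂, rfl⟩
    · match k with
      | 0 =>
        rw [List.replicate_zero, mono_nil, Bul_tl_zero, map_add, map_smul, Ee_pr,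
          Ee_tl_succ_mul]
        simp
      | (k+1) =>
        rw [show mono (List.replicate (k+1) false) = tl (k+1) from rfl, Bul_tl_succ,
          map_add, map_add, map_smul, Ee_pr, Ee_pr, Ee_tl_succ_mul]
        simp
    · rw [← pr_mul_mono, Bul_pr, Ee_pr]

end SDer
namespace SDer

lemma tlg (k : ℕ) (g : F) : tl k * g = tl (k+1) * dc g + pr k * dd g + Ee g • tl k := by
  conv_lhs => rw [decomp g]
  rw [mul_add, mul_add, ← mul_assoc, ← mul_assoc, cF_eq, tl_mul_tl, dF_eq, tl_mul_pr,
    mul_smul_comm, mul_one]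
  norm_num

lemma MAIN_tl (m : ℕ) (g : F) :
    Sp (bulletF (tl m) g) = bulletF (Sp (tl m)) g + bulletF (tl m) (Sp g)
      + Ee (tl m) • g + Ee g • tl m := by
  match m with
  | 0 =>
    rw [tl_zero, Bul_tl_zero, Sp_one, map_zero, LinearMap.zero_apply, Bul_tl_zero,
      map_add, map_smul, Sp_pr_zero, Sp_tl_mul, dcSp, Ee_one]
    rw [mul_sub, ← mul_assoc, cF_eq, tl_mul_tl]
    simp only [Nat.zero_add]
    rw [mul_add]
    rw [show (1:ℚ) • g = tl 0 * g from by rw [tl_zero, one_mul, one_smul]]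
    simp only [tlg 0 g]
    rw [show Ee g • (1:F) = Ee g • tl 0 from rfl]
    simp only [Nat.zero_add]
    module
  | 1 =>
    rw [show (1:ℕ) = 0 + 1 from rfl, Bul_tl_succ, Sp_tl_succ, tl_zero, Bul_tl_zero,
      Bul_tl_succ, Ee_tl_succ, zero_smul, add_zero,
      map_add, map_add, map_smul, Sp_pr_zero, Sp_pr_succ, Sp_tl_mul, dcSp]
    rw [mul_add, mul_sub, ← mul_assoc, cF_eq, tl_mul_tl]
    simp only [Nat.zero_add]
    simp only [tlg 1 g]
    module
  | (m+2) =>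
    rw [show (m+2:ℕ) = (m+1) + 1 from rfl, Bul_tl_succ, Sp_tl_succ, Bul_tl_succ,
      Bul_tl_succ, Ee_tl_succ, zero_smul, add_zero,
      map_add, map_add, map_smul, Sp_pr_succ, Sp_pr_succ, Sp_tl_mul, dcSp]
    rw [mul_add, mul_sub, ← mul_assoc, cF_eq, tl_mul_tl]
    simp only [show (m+1+1:ℕ) = m + 2 from rfl, show (m+1+2:ℕ) = m + 3 from rfl,
      show (m+2+1:ℕ) = m + 3 from rfl, show (m+1+1+1:ℕ) = m+3 from rfl]
    simp only [tlg (m+2) g]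
    module

end SDer
namespace SDer

lemma MAIN_step (a : ℕ) (f g : F)
    (IH : Sp (bulletF f g) = bulletF (Sp f) g + bulletF f (Sp g) + Ee f • g + Ee g • f) :
    Sp (bulletF (pr a * f) g) = bulletF (Sp (pr a * f)) g + bulletF (pr a * f) (Sp g)
      + Ee (pr a * f) • g + Ee g • (pr a * f) := by
  rw [Bul_pr, Ee_pr, zero_smul, add_zero, Bul_pr]
  match a with
  | 0 =>
    rw [Sp_pr_zero, Sp_pr_zero, IH, map_add, LinearMap.add_apply, Bul_tl_mul 0, Bul_pr]
    rw [mul_add, mul_add, mul_add, mul_smul_comm, mul_smul_comm]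
    abel
  | (a+1) =>
    rw [Sp_pr_succ, Sp_pr_succ, IH, map_add, map_add, LinearMap.add_apply,
      LinearMap.add_apply, Bul_tl_mul (a+1), Bul_pr, Bul_pr]
    rw [mul_add, mul_add, mul_add, mul_smul_comm, mul_smul_comm]
    abel

lemma MAIN_mono : ∀ (n : ℕ) (u : Mon), u.length ≤ n → ∀ g : F,
    Sp (bulletF (mono u) g) = bulletF (Sp (mono u)) g + bulletF (mono u) (Sp g)
      + Ee (mono u) • g + Ee g • (mono u) := by
  intro n
  induction n with
  | zero =>
    intro u hu g
    have : u = [] := List.eq_nil_of_length_eq_zero (Nat.le_zero.mp hu)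
    subst this
    have := MAIN_tl 0 g
    simpa [tl, List.replicate_zero] using this
  | succ n ih =>
    intro u hu g
    rcases word_decomp u with ⟨m, rfl⟩ | ⟨a, u₂, rfl⟩
    · have := MAIN_tl m g
      simpa [tl] using this
    · have hlen : u₂.length ≤ n := by
        have := hu
        simp only [List.length_append, List.length_replicate, List.length_cons] at this
        omega
      rw [← pr_mul_mono]
      have hE : Ee (mono u₂) • g + Ee g • mono u₂ = Ee (mono u₂) • g + Ee g • mono u₂ := rfl
      exact MAIN_step a (mono u₂) g (ih u₂ hlen g)

lemma MAIN_F (f g : F) :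
    Sp (bulletF f g) = bulletF (Sp f) g + bulletF f (Sp g) + Ee f • g + Ee g • f := by
  have := lin_ext (φ := Sp ∘ₗ bulletF.flip g)
    (ψ := (bulletF.flip g) ∘ₗ Sp + bulletF.flip (Sp g)
      + (LinearMap.toSpanSingleton ℚ F g) ∘ₗ Ee + Ee g • LinearMap.id) ?_ f
  · simpa [add_assoc] using this
  · intro w
    have := MAIN_mono w.length w le_rfl g
    simpa [add_assoc] using this

end SDer
namespace SDer

lemma fh_ext {M : Type} [AddCommMonoid M] [Module ℚ M] {φ ψ : Fhat →ₗ[ℚ] M}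
    (h : ∀ o : Option Mon, φ (Finsupp.single o 1) = ψ (Finsupp.single o 1)) (x : Fhat) :
    φ x = ψ x := by
  revert x
  suffices hh : φ = ψ by intro x; rw [hh]
  apply Finsupp.lhom_ext; intro a b
  have : (Finsupp.single a b : Fhat) = b • Finsupp.single a 1 := by
    rw [Finsupp.smul_single, smul_eq_mul, mul_one]
  rw [this, map_smul, map_smul, h a]

lemma ι_mono (w : Mon) : ι (mono w) = Finsupp.single (some w) 1 := by
  have := lsum_mono_apply (M := Fhat)
    (fun x => Finsupp.single (some (FreeMonoid.toList x)) 1) w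
  simp only [FreeMonoid.toList_ofList] at this
  exact this

lemma SHat_some (w : Mon) : SHat (Finsupp.single (some w) (1:ℚ)) = Smap w := by
  simp [SHat]

lemma SHat_ehat : SHat ehat = 0 := by
  simp [SHat, ehat]

lemma bulletHat_single (o p : Option Mon) :
    bulletHat (Finsupp.single o (1:ℚ)) (Finsupp.single p (1:ℚ)) = bulletHatB o p := by
  simp [bulletHat]

lemma Smap_eq (w : Mon) : Smap w = ι (Sp (mono w)) + Ee (mono w) • ehat := by
  rw [Smap, Sp_mono, Ee_mono]
  congr 1
  split_ifs <;> simp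

lemma SHat_ι (f : F) : SHat (ι f) = ι (Sp f) + Ee f • ehat := by
  have := lin_ext (φ := SHat ∘ₗ ι)
    (ψ := ι ∘ₗ Sp + (LinearMap.toSpanSingleton ℚ Fhat ehat) ∘ₗ Ee) ?_ f
  · simpa using this
  · intro w
    simp only [LinearMap.comp_apply, LinearMap.add_apply, LinearMap.toSpanSingleton_apply]
    rw [ι_mono, SHat_some, Smap_eq]

lemma bulletHat_ι_mono (f : F) (v : Mon) :
    bulletHat (ι f) (ι (mono v)) = ι (bulletF f (mono v)) := by
  have := lin_ext (φ := (bulletHat.flip (ι (mono v))) ∘ₗ ι)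
    (ψ := ι ∘ₗ bulletF.flip (mono v)) ?_ f
  · simpa using this
  · intro w
    simp only [LinearMap.comp_apply, LinearMap.flip_apply]
    rw [ι_mono, ι_mono, bulletHat_single, Bul_mono]
    rfl

lemma bulletHat_ι_ι (f g : F) :
    bulletHat (ι f) (ι g) = ι (bulletF f g) := by
  have := lin_ext (φ := (bulletHat (ι f)) ∘ₗ ι) (ψ := ι ∘ₗ bulletF f) ?_ g
  · simpa using this
  · intro w
    simpa using bulletHat_ι_mono f w

lemma bulletHat_ehat_left (x : Fhat) : bulletHat ehat x = x := by
  have := fh_ext (φ := bulletHat ehat) (ψ := LinearMap.id) ?_ x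
  · simpa using this
  · intro o
    rw [show ehat = Finsupp.single none (1:ℚ) from rfl, bulletHat_single]
    simp [bulletHatB]

lemma bulletHat_ehat_right (x : Fhat) : bulletHat x ehat = x := by
  have := fh_ext (φ := bulletHat.flip ehat) (ψ := LinearMap.id) ?_ x
  · simpa using this
  · intro o
    simp only [LinearMap.flip_apply, LinearMap.id_apply]
    rw [show ehat = Finsupp.single none (1:ℚ) from rfl, bulletHat_single]
    cases o <;> rfl

lemma H_basis (o p : Option Mon) :
    SHat (bulletHat (Finsupp.single o (1:ℚ)) (Finsupp.single p (1:ℚ)))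
      = bulletHat (SHat (Finsupp.single o 1)) (Finsupp.single p 1)
        + bulletHat (Finsupp.single o 1) (SHat (Finsupp.single p 1)) := by
  match o, p with
  | none, none =>
    rw [bulletHat_single, show bulletHatB none none = ehat from rfl,
      show (Finsupp.single none (1:ℚ) : Fhat) = ehat from rfl, SHat_ehat]
    simp
  | none, some v =>
    rw [bulletHat_single, show bulletHatB none (some v) = Finsupp.single (some v) 1 from rfl,
      show (Finsupp.single none (1:ℚ) : Fhat) = ehat from rfl, SHat_ehat, SHat_some]
    rw [map_zero, LinearMap.zero_apply, zero_add, bulletHat_ehat_left]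
  | some u, none =>
    rw [bulletHat_single, show bulletHatB (some u) none = Finsupp.single (some u) 1 from rfl,
      show (Finsupp.single none (1:ℚ) : Fhat) = ehat from rfl, SHat_ehat, SHat_some,
      map_zero, add_zero, bulletHat_ehat_right]
  | some u, some v =>
    rw [bulletHat_single, SHat_some, SHat_some,
      show bulletHatB (some u) (some v) = ι (bulletMon u v) from rfl,
      ← Bul_mono, SHat_ι, E_Bul, zero_smul, add_zero, MAIN_F,
      Smap_eq, Smap_eq, ← ι_mono, ← ι_mono]
    simp only [map_add, map_smul, LinearMap.add_apply, LinearMap.smul_apply,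
      bulletHat_ι_ι, bulletHat_ehat_left, bulletHat_ehat_right]
    abel

lemma derivation_all (u v : Fhat) :
    SHat (bulletHat u v) = bulletHat (SHat u) v + bulletHat u (SHat v) := by
  have h1 : ∀ (p : Option Mon) (x : Fhat),
      SHat (bulletHat x (Finsupp.single p 1)) = bulletHat (SHat x) (Finsupp.single p 1)
        + bulletHat x (SHat (Finsupp.single p 1)) := by
    intro p x
    have := fh_ext (φ := SHat ∘ₗ bulletHat.flip (Finsupp.single p 1))
      (ψ := (bulletHat.flip (Finsupp.single p 1)) ∘ₗ SHat
        + bulletHat.flip (SHat (Finsupp.single p 1))) ?_ x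
    · simpa using this
    · intro o; simpa using H_basis o p
  have := fh_ext (φ := SHat ∘ₗ bulletHat u)
    (ψ := bulletHat (SHat u) + (bulletHat u) ∘ₗ SHat) ?_ v
  · simpa using this
  · intro p; simpa using h1 p u

end SDer

/-- `S` is a derivation on `(F̂, •)`:
`S(u • v) = S(u) • v + u • S(v)`; moreover `S(1) = e` and `S(e) = 0`. -/
theorem S_derivation :
    (∀ u v : Fhat, SHat (bulletHat u v) = bulletHat (SHat u) v + bulletHat u (SHat v))
    ∧ SHat (ι 1) = ehat ∧ SHat ehat = 0 := by
  refine ⟨SDer.derivation_all, ?_, SDer.SHat_ehat⟩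
  rw [← SDer.mono_nil, SDer.ι_mono, SDer.SHat_some, Smap]
  rw [show toExps [] = [0] from rfl, SDer.SexpF_single, if_pos rfl, map_zero, zero_add,
    if_pos rfl]
end

section
/- Suppose m_1+n_1 = m_2+n_2 and |m_1−n_1| ≤ |m_2−n_2|. Then β(c^{m_1} d c^{n_1}) ≥ β(c^{m_2} d c^{n_2}), with equality if and only if |m_1−n_1| = |m_2−n_2|. -/
open scoped TensorProduct

/-- The monomial `cᵐ d cⁿ`, i.e. the list `(m, n)`. -/
def cdc (m n : ℕ) : Mon := List.replicate m false ++ true :: List.replicate n false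

open FreeMonoid in
lemma ofList_inj : Function.Injective (ofList : Mon → FreeMonoid Bool) :=
  fun _ _ h => h

open Classical in
lemma mono_apply (v w : Mon) : (mono v).coeff (FreeMonoid.ofList w) = if w = v then 1 else 0 := by
  classical
  rw [mono, MonoidAlgebra.coeff_single, Finsupp.single_apply]
  by_cases h : w = v
  · subst h; simp
  · rw [if_neg h, if_neg (fun hh => h (ofList_inj hh.symm))]

lemma mono_mul_mono (v w : Mon) : mono v * mono w = mono (v ++ w) := by
  rw [mono, mono, mono, MonoidAlgebra.single_mul_single, one_mul, FreeMonoid.ofList_append]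

lemma single_mul_coeff (a : Bool) (f : F) (t : Mon) :
    (mono [a] * f).coeff (FreeMonoid.ofList (a :: t)) = f.coeff (FreeMonoid.ofList t) := by
  rw [mono, MonoidAlgebra.coeff_single_mul_eq_mul_coeff (m₂ := FreeMonoid.ofList t), one_mul]
  intro b _
  constructor
  · intro h
    have : (a :: FreeMonoid.toList b : List Bool) = a :: t := h
    exact (by simpa using this : FreeMonoid.toList b = t)
  · rintro rfl; rfl

lemma single_mul_coeff_ne (a b : Bool) (f : F) (t : Mon) (h : a ≠ b) :
    (mono [a] * f).coeff (FreeMonoid.ofList (b :: t)) = 0 := by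
  rw [mono]
  apply MonoidAlgebra.single_mul_apply_of_not_exists_mul
  rintro ⟨z, hz⟩
  have : (b :: t : List Bool) = a :: FreeMonoid.toList z := congrArg FreeMonoid.toList hz
  exact h (by injection this with h1 h2; exact h1.symm)

lemma single_mul_coeff_nil (a : Bool) (f : F) :
    (mono [a] * f).coeff (FreeMonoid.ofList []) = 0 := by
  rw [mono]
  apply MonoidAlgebra.single_mul_apply_of_not_exists_mul
  rintro ⟨z, hz⟩
  have : ([] : List Bool) = a :: FreeMonoid.toList z := congrArg FreeMonoid.toList hz
  simp at this

lemma mul_cF_coeff (f : F) (t : Mon) :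
    (f * cF).coeff (FreeMonoid.ofList (t ++ [false])) = f.coeff (FreeMonoid.ofList t) := by
  rw [cF, mono, MonoidAlgebra.coeff_mul_single_eq_coeff_mul (m₂ := FreeMonoid.ofList t), mul_one]
  intro b _
  constructor
  · intro h
    have : (FreeMonoid.toList b ++ [false] : List Bool) = t ++ [false] := h
    exact (by simpa using this : FreeMonoid.toList b = t)
  · rintro rfl; rfl

lemma mul_cF_coeff_ne (f : F) (t : Mon) (h : t.getLast? ≠ some false) :
    (f * cF).coeff (FreeMonoid.ofList t) = 0 := by
  rw [cF, mono]
  apply MonoidAlgebra.mul_single_apply_of_not_exists_mul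
  rintro ⟨z, hz⟩
  have : (t : List Bool) = FreeMonoid.toList z ++ [false] := congrArg FreeMonoid.toList hz
  rw [this] at h
  simp [List.getLast?_append] at h

lemma G_apply (f : F) (y : FreeMonoid Bool) :
    (G f).coeff y = f.coeff.sum fun w r => r * (gMon (FreeMonoid.toList w)).coeff y := by
  have h1 : G f = f.coeff.sum fun w r => r • gMon (FreeMonoid.toList w) := by
    rw [G]; rfl
  rw [h1, MonoidAlgebra.coeff_finsuppSum, Finsupp.sum_apply]
  exact Finsupp.sum_congr fun w _ => by rw [MonoidAlgebra.coeff_smul, Finsupp.smul_apply, smul_eq_mul]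

open Classical in
lemma sum_ite_coeff (f : F) (x : FreeMonoid Bool) :
    (f.coeff.sum fun w r => if w = x then r else 0) = f.coeff x := by
  rw [Finsupp.sum, Finset.sum_ite_eq' f.coeff.support x (fun w => f.coeff w)]
  by_cases h : x ∈ f.coeff.support
  · simp [h]
  · simp [h, Finsupp.notMem_support_iff.mp h]


lemma gLetter_eq (a : Bool) : gLetter a = mono (if a then [false, true] else [true]) := by
  cases a
  · rfl
  · show cF * dF = _
    rw [cF, dF, mono_mul_mono]; rfl

lemma gMon_purec (t : Mon) : ∀ n, (gMon t).coeff (FreeMonoid.ofList (List.replicate n false)) = 0 := by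
  induction t with
  | nil => intro n; simp [gMon]
  | cons a s ih =>
    intro n
    rw [gMon, MonoidAlgebra.coeff_add, Finsupp.add_apply, gLetter_eq, mono_mul_mono, mono_apply]
    have h1 : ¬ (List.replicate n false = (if a then [false, true] else [true]) ++ s) := by
      intro h
      have : (true : Bool) ∈ List.replicate n false := by
        rw [h]; cases a <;> simp
      exact absurd (List.eq_of_mem_replicate this) (by simp)
    rw [if_neg h1, zero_add]
    cases n with
    | zero => exact single_mul_coeff_nil a _
    | succ k =>
      rw [List.replicate_succ]
      cases a
      · rw [single_mul_coeff, ih k]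
      · exact single_mul_coeff_ne true false _ _ (by simp)


lemma cdc_succ (m n : ℕ) : cdc (m+1) n = false :: cdc m n := rfl

lemma gLetter_false : gLetter false * mono (s : Mon) = mono (true :: s) := by
  show dF * mono s = _
  rw [dF, mono_mul_mono]; rfl

lemma gLetter_true : gLetter true * mono (s : Mon) = mono (false :: true :: s) := by
  show cF * dF * mono s = _
  rw [cF, dF, mono_mul_mono, mono_mul_mono]; rfl

lemma true_cons_ne_repl (s : Mon) (k : ℕ) : ¬ (true :: s = List.replicate k false) := by
  intro h
  have : (true : Bool) ∈ List.replicate k false := h ▸ List.mem_cons_self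
  exact absurd (List.eq_of_mem_replicate this) (by simp)

lemma cons_repl_iff (s : Mon) (j k : ℕ) (h : j + 1 = k) :
    (false :: s = List.replicate k false) ↔ s = List.replicate j false := by
  subst h
  rw [List.replicate_succ]
  simp

open Classical in
lemma gMon_cdc (u : Mon) : ∀ m n : ℕ, (gMon u).coeff (FreeMonoid.ofList (cdc m n)) =
    (if u = List.replicate (m+n+1) false then 1 else 0) +
    (match m with
     | 0 => (0:ℚ)
     | m'+1 => if u = cdc m' n then (1:ℚ) else 0) := by
  induction u with
  | nil =>
    intro m n
    have h1 : ([] : Mon) ≠ List.replicate (m+n+1) false := by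
      intro h
      have := congrArg List.length h
      simp at this
    have h2 : ∀ m' n', ([] : Mon) ≠ cdc m' n' := by
      intro m' n' h
      have := congrArg List.length h
      simp [cdc] at this
    cases m <;> simp [gMon, h1, h2]
  | cons a s ih =>
    intro m n
    rw [gMon, MonoidAlgebra.coeff_add, Finsupp.add_apply]
    cases a with
    | false =>
      rw [gLetter_false, mono_apply]
      cases m with
      | zero =>
        have h1 : (cdc 0 n = true :: s) ↔ s = List.replicate n false := by
          simp [cdc, eq_comm]
        have h2 : (mono [false] * gMon s).coeff (FreeMonoid.ofList (cdc 0 n)) = 0 :=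
          single_mul_coeff_ne false true _ _ (by simp)
        have h3 : ((false :: s = List.replicate (0+n+1) false)) ↔ s = List.replicate n false :=
          cons_repl_iff s n _ (by omega)
        rw [h2, add_zero]
        simp only [h3]
        by_cases hs : s = List.replicate n false
        · rw [if_pos hs, if_pos (h1.mpr hs)]; ring
        · rw [if_neg hs, if_neg (fun h => hs (h1.mp h))]; ring
      | succ m' =>
        have h1 : ¬ (cdc (m'+1) n = true :: s) := by
          rw [cdc_succ]; simp
        rw [if_neg h1, zero_add, cdc_succ, single_mul_coeff, ih m' n]
        cases m' with
        | zero =>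
          have e1 : (s = List.replicate (0+n+1) false) ↔
              (false :: s = List.replicate (0+1+n+1) false) :=
            (cons_repl_iff s _ _ (by omega)).symm
          have e2 : ¬ (false :: s = cdc 0 n) := by simp [cdc]
          simp only [e1, e2, if_false]
        | succ m'' =>
          have e1 : (s = List.replicate (m''+1+n+1) false) ↔
              (false :: s = List.replicate (m''+1+1+n+1) false) :=
            (cons_repl_iff s _ _ (by omega)).symm
          have e2 : (s = cdc m'' n) ↔ (false :: s = cdc (m''+1) n) := by
            rw [cdc_succ]; simp
          simp only [e1, e2]
    | true =>
      rw [gLetter_true, mono_apply]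
      cases m with
      | zero =>
        have h1 : ¬ (cdc 0 n = false :: true :: s) := by simp [cdc]
        have h2 : (mono [true] * gMon s).coeff (FreeMonoid.ofList (cdc 0 n)) = 0 := by
          have e : cdc 0 n = true :: List.replicate n false := rfl
          rw [e, single_mul_coeff, gMon_purec]
        have h3 : ¬ ((true :: s = List.replicate (0+n+1) false)) :=
          true_cons_ne_repl s _
        rw [if_neg h1, h2, if_neg h3]
      | succ m' =>
        have h2 : (mono [true] * gMon s).coeff (FreeMonoid.ofList (cdc (m'+1) n)) = 0 := by
          rw [cdc_succ]
          exact single_mul_coeff_ne true false _ _ (by simp)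
        have h3 : ¬ ((true :: s = List.replicate (m'+1+n+1) false)) :=
          true_cons_ne_repl s _
        rw [h2, add_zero, if_neg h3, zero_add]
        cases m' with
        | zero =>
          have h1 : (cdc 1 n = false :: true :: s) ↔ (true :: s = cdc 0 n) := by
            rw [cdc_succ]; simp [eq_comm]
          simp only [h1]
        | succ m'' =>
          have h1 : ¬ (cdc (m''+2) n = false :: true :: s) := by
            rw [cdc_succ, cdc_succ]; simp [cdc]
          have h4 : ¬ (true :: s = cdc (m''+1) n) := by
            rw [cdc_succ]; simp
          simp [h1, h4]


lemma deg_cdc (m n : ℕ) : deg (cdc m n) = m + n + 2 := by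
  simp [deg, cdc, List.count_cons, List.count_replicate]
  omega

lemma Psi_succ (k : ℕ) : Psi (k+1) = Psi k * cF + G (Psi k) := rfl

lemma psi_c : ∀ k, (Psi k).coeff (FreeMonoid.ofList (List.replicate k false)) = 1 := by
  intro k
  induction k with
  | zero =>
    show (1 : F).coeff (1 : FreeMonoid Bool) = 1
    rw [MonoidAlgebra.one_def, MonoidAlgebra.coeff_single, Finsupp.single_eq_same]
  | succ k ih =>
    rw [Psi_succ, MonoidAlgebra.coeff_add, Finsupp.add_apply]
    have hz : (G (Psi k)).coeff (FreeMonoid.ofList (List.replicate (k+1) false)) = 0 := by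
      rw [G_apply]
      rw [Finsupp.sum_congr (g2 := fun _ _ => 0) fun w _ => by rw [gMon_purec, mul_zero]]
      exact Finsupp.sum_fun_zero _
    rw [hz, add_zero, List.replicate_succ', mul_cF_coeff, ih]

open Classical in
lemma sum_ite_coeff' (f : F) (x : Mon) :
    (f.coeff.sum fun w r => if FreeMonoid.toList w = x then r else 0) = f.coeff (FreeMonoid.ofList x) := by
  rw [← sum_ite_coeff f (FreeMonoid.ofList x)]
  exact Finsupp.sum_congr fun w _ => if_congr ⟨fun h => h, fun h => h⟩ rfl rfl

open Classical in
lemma G_coeff_cdc (f : F) (m n : ℕ) : (G f).coeff (FreeMonoid.ofList (cdc m n)) =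
    f.coeff (FreeMonoid.ofList (List.replicate (m+n+1) false)) +
    (match m with
     | 0 => (0:ℚ)
     | m'+1 => f.coeff (FreeMonoid.ofList (cdc m' n))) := by
  rw [G_apply]
  rw [Finsupp.sum_congr (g2 := fun w r =>
      (if FreeMonoid.toList w = List.replicate (m+n+1) false then r else 0) +
      (match m with
       | 0 => (0:ℚ)
       | m'+1 => if FreeMonoid.toList w = cdc m' n then r else 0)) ?_]
  · rw [Finsupp.sum_add]
    congr 1
    · exact sum_ite_coeff' f _
    · cases m with
      | zero => exact Finsupp.sum_fun_zero _
      | succ m' => exact sum_ite_coeff' f _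
  · intro w _
    rw [gMon_cdc, mul_add]
    congr 1
    · rw [mul_ite, mul_one, mul_zero]
    · cases m with
      | zero => exact mul_zero _
      | succ m' => rw [mul_ite, mul_one, mul_zero]

lemma beta_eq (m n : ℕ) : beta (cdc m n) = (Psi (m+n+2)).coeff (FreeMonoid.ofList (cdc m n)) := by
  rw [beta, deg_cdc]

lemma beta_rec0 (m : ℕ) : beta (cdc m 0) =
    1 + (match m with | 0 => (0:ℚ) | m'+1 => beta (cdc m' 0)) := by
  rw [beta_eq, Psi_succ, MonoidAlgebra.coeff_add, Finsupp.add_apply]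
  have h1 : (Psi (m+0+1) * cF).coeff (FreeMonoid.ofList (cdc m 0)) = 0 := by
    apply mul_cF_coeff_ne
    have : cdc m 0 = List.replicate m false ++ [true] := rfl
    rw [this, List.getLast?_concat]
    simp
  rw [h1, zero_add, G_coeff_cdc, psi_c]
  congr 1
  cases m with
  | zero => rfl
  | succ m' =>
    show (Psi (m'+1+0+1)).coeff (FreeMonoid.ofList (cdc m' 0)) = beta (cdc m' 0)
    rw [beta_eq, show m'+1+0+1 = m'+0+2 from by omega]

lemma beta_recS (m n : ℕ) : beta (cdc m (n+1)) =
    beta (cdc m n) + 1 +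
    (match m with | 0 => (0:ℚ) | m'+1 => beta (cdc m' (n+1))) := by
  rw [beta_eq]
  have e : m + (n+1) + 2 = (m+n+2) + 1 := by omega
  rw [e, Psi_succ, MonoidAlgebra.coeff_add, Finsupp.add_apply]
  have hsplit : cdc m (n+1) = cdc m n ++ [false] := by
    simp [cdc, List.replicate_succ']
  rw [hsplit, mul_cF_coeff, ← beta_eq]
  rw [hsplit.symm, G_coeff_cdc]
  have e3 : m + (n+1) + 1 = m + n + 2 := by omega
  rw [e3, psi_c, ← add_assoc]
  congr 1
  cases m with
  | zero => rfl
  | succ m' =>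
    show (Psi (m'+1+n+2)).coeff (FreeMonoid.ofList (cdc m' (n+1))) = beta (cdc m' (n+1))
    rw [beta_eq, show m'+1+n+2 = m'+(n+1)+2 from by omega]

lemma choose_succ_self' (k : ℕ) : (k+1).choose k = k+1 := by
  rw [← Nat.choose_symm (by omega), show k+1-k = 1 from by omega, Nat.choose_one_right]

lemma beta_closed : ∀ m n, beta (cdc m n) = ((m+n+2).choose (m+1) : ℚ) - 1 := by
  intro m
  induction m with
  | zero =>
    intro n
    induction n with
    | zero => rw [beta_rec0]; norm_num
    | succ k ih =>
      rw [beta_recS, ih]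
      rw [show (0:ℕ)+k+2 = k+2 from by omega, show (0:ℕ)+(k+1)+2 = k+3 from by omega,
        Nat.choose_one_right, Nat.choose_one_right]
      push_cast
      ring
  | succ m' ihm =>
    intro n
    induction n with
    | zero =>
      rw [beta_rec0]
      show 1 + beta (cdc m' 0) = _
      rw [ihm 0]
      rw [show m'+0+2 = m'+1+1 from by omega, choose_succ_self',
        show m'+1+0+2 = m'+2+1 from by omega, choose_succ_self']
      push_cast
      ring
    | succ k ihn =>
      rw [beta_recS, ihn]
      show _ + 1 + beta (cdc m' (k+1)) = _
      rw [ihm (k+1)]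
      have hp : (m'+k+4).choose (m'+2) = (m'+k+3).choose (m'+1) + (m'+k+3).choose (m'+2) := by
        rw [show m'+k+4 = (m'+k+3)+1 from by omega, show m'+2 = (m'+1)+1 from by omega]
        exact Nat.choose_succ_succ _ _
      rw [show m'+1+k+2 = m'+k+3 from by omega, show m'+(k+1)+2 = m'+k+3 from by omega,
        show m'+1+(k+1)+2 = m'+k+4 from by omega, hp]
      push_cast
      ring

lemma choose_strict_anti_step (N k : ℕ) (h2k : N ≤ 2*k) (hk : k < N) :
    N.choose (k+1) < N.choose k := by
  have key := Nat.choose_succ_right_eq N k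
  have h1 : 0 < N.choose k := Nat.choose_pos (le_of_lt hk)
  have h2 : 0 < N.choose (k+1) := Nat.choose_pos hk
  by_contra hle
  push_neg at hle
  have : N.choose k * (k+1) ≤ N.choose (k+1) * (k+1) := Nat.mul_le_mul_right _ hle
  rw [key] at this
  have hlt : N.choose k * (N - k) < N.choose k * (k+1) := by
    have : N - k < k + 1 := by omega
    exact Nat.mul_lt_mul_of_le_of_lt (le_refl _) this h1
  omega

lemma choose_strict_anti (N a : ℕ) (ha : N ≤ 2*a) :
    ∀ b, a < b → b ≤ N → N.choose b < N.choose a := by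
  intro b
  induction b with
  | zero => omega
  | succ b ih =>
    intro hab hbN
    rcases Nat.lt_or_ge a b with h | h
    · exact lt_trans (choose_strict_anti_step N b (by omega) (by omega)) (ih h (by omega))
    · have : a = b := by omega
      subst this
      exact choose_strict_anti_step N a ha (by omega)

lemma choose_max_eq (m n : ℕ) : (m+n+2).choose (m+1) = (m+n+2).choose (max m n + 1) := by
  rcases le_total n m with h | h
  · rw [max_eq_left h]
  · rw [max_eq_right h, ← Nat.choose_symm (show m+1 ≤ m+n+2 by omega),
      show m+n+2-(m+1) = n+1 from by omega]

lemma abs_sub_nat (m n : ℕ) : |(m:ℤ) - n| = 2*((max m n : ℕ) : ℤ) - (m+n) := by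
  rcases le_total m n with h | h
  · rw [max_eq_right h, abs_of_nonpos (by omega : (m:ℤ) - n ≤ 0)]
    omega
  · rw [max_eq_left h, abs_of_nonneg (by omega : (0:ℤ) ≤ (m:ℤ) - n)]
    omega

/-- If `m₁+n₁ = m₂+n₂` and `|m₁−n₁| ≤ |m₂−n₂|`, then
`β(c^{m₁} d c^{n₁}) ≥ β(c^{m₂} d c^{n₂})`, with equality iff `|m₁−n₁| = |m₂−n₂|`. -/
theorem beta_balance (m₁ n₁ m₂ n₂ : ℕ) (hsum : m₁ + n₁ = m₂ + n₂)
    (hbal : |(m₁ : ℤ) - n₁| ≤ |(m₂ : ℤ) - n₂|) :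
    beta (cdc m₁ n₁) ≥ beta (cdc m₂ n₂)
    ∧ (beta (cdc m₁ n₁) = beta (cdc m₂ n₂) ↔ |(m₁ : ℤ) - n₁| = |(m₂ : ℤ) - n₂|) := by
  have hA1 := le_max_left m₁ n₁
  have hB1 := le_max_right m₁ n₁
  have hC1 := max_choice m₁ n₁
  have hA2 := le_max_left m₂ n₂
  have hB2 := le_max_right m₂ n₂
  have hC2 := max_choice m₂ n₂
  set M₁ := max m₁ n₁ with hM₁
  set M₂ := max m₂ n₂ with hM₂
  have hb1 : beta (cdc m₁ n₁) = (((m₁+n₁+2).choose (M₁+1) : ℕ) : ℚ) - 1 := by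
    rw [beta_closed, choose_max_eq]
  have hb2 : beta (cdc m₂ n₂) = (((m₁+n₁+2).choose (M₂+1) : ℕ) : ℚ) - 1 := by
    rw [beta_closed, choose_max_eq, ← hsum]
  rw [abs_sub_nat, abs_sub_nat] at hbal ⊢
  rw [← hM₁, ← hM₂] at hbal ⊢
  have hM : M₁ ≤ M₂ := by omega
  rcases eq_or_lt_of_le hM with heq | hlt
  · rw [hb1, hb2, heq]
    exact ⟨le_refl _, ⟨fun _ => by omega, fun _ => rfl⟩⟩
  · have hchoose : (m₁+n₁+2).choose (M₂+1) < (m₁+n₁+2).choose (M₁+1) :=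
      choose_strict_anti (m₁+n₁+2) (M₁+1) (by omega) (M₂+1) (by omega) (by omega)
    have hq : (((m₁+n₁+2).choose (M₂+1) : ℕ) : ℚ) < (((m₁+n₁+2).choose (M₁+1) : ℕ) : ℚ) := by
      exact_mod_cast hchoose
    constructor
    · rw [hb1, hb2]; linarith
    · constructor
      · intro heq'
        rw [hb1, hb2] at heq'
        exfalso
        have : (((m₁+n₁+2).choose (M₂+1) : ℕ) : ℚ) = (((m₁+n₁+2).choose (M₁+1) : ℕ) : ℚ) := by
          linarith
        exact absurd this (ne_of_lt hq)
      · intro habs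
        exfalso
        omega
end
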